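/- For all λ > 0 and all γ ≥ 0, ∫₀^∞ e^{γh} · 4πλ^{3/2} h² e^{−λπh²} dh ≥ ∫₀^∞ e^{γh} · 2λπ h e^{−λπh²} dh ≥ ∫₀^∞ e^{γh} · 2λ^{1/2} e^{−λπh²} dh (all three integrals being finite). That is, in the moment-generating-function order, H_V ≥_{mgf} R ≥_{mgf} H_S. -/

import Mathlib

open MeasureTheory Set Filter

/-- Integrability of `h^n * exp(-(b h^2))` on `(0,∞)`. -/
lemma intOn_pow {b : ℝ} (hb : 0 < b) (n : ℕ) :
    IntegrableOn (fun h : ℝ => h ^ n * Real.exp (-(b * h ^ 2))) (Ioi 0) := by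
  have h1 : (-1:ℝ) < (n:ℝ) := lt_of_lt_of_le neg_one_lt_zero (Nat.cast_nonneg n)
  simpa [Real.rpow_natCast, neg_mul] using integrableOn_rpow_mul_exp_neg_mul_sq hb h1

/-- Integrability of `exp(γ h) * h^n * exp(-(b h^2))` on `(0,∞)`. -/
lemma aux_integrable {b : ℝ} (hb : 0 < b) {γ : ℝ} (hγ : 0 ≤ γ) (n : ℕ) :
    IntegrableOn (fun h : ℝ => Real.exp (γ * h) * (h ^ n * Real.exp (-(b * h ^ 2))))
      (Ioi 0) := by
  have hdom : IntegrableOn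
      (fun h : ℝ => Real.exp (γ ^ 2 / (2 * b)) * (h ^ n * Real.exp (-(b / 2 * h ^ 2))))
      (Ioi 0) := (intOn_pow (half_pos hb) n).const_mul _
  refine Integrable.mono' hdom ?_ ?_
  · exact (Continuous.aestronglyMeasurable (by fun_prop))
  · filter_upwards [ae_restrict_mem measurableSet_Ioi] with h hh
    have hh' : (0:ℝ) < h := hh
    rw [Real.norm_eq_abs, abs_of_nonneg (by positivity)]
    have key : Real.exp (γ * h) * Real.exp (-(b * h ^ 2)) ≤
        Real.exp (γ ^ 2 / (2 * b)) * Real.exp (-(b / 2 * h ^ 2)) := by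
      rw [← Real.exp_add, ← Real.exp_add, Real.exp_le_exp, ← sub_nonneg]
      have expand : γ ^ 2 / (2 * b) + -(b / 2 * h ^ 2) - (γ * h + -(b * h ^ 2)) =
          (γ - b * h) ^ 2 / (2 * b) := by field_simp; ring
      rw [expand]; positivity
    have hn : (0:ℝ) ≤ h ^ n := pow_nonneg (le_of_lt hh) n
    calc Real.exp (γ * h) * (h ^ n * Real.exp (-(b * h ^ 2)))
        = (Real.exp (γ * h) * Real.exp (-(b * h ^ 2))) * h ^ n := by ring
      _ ≤ (Real.exp (γ ^ 2 / (2 * b)) * Real.exp (-(b / 2 * h ^ 2))) * h ^ n :=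
          mul_le_mul_of_nonneg_right key hn
      _ = Real.exp (γ ^ 2 / (2 * b)) * (h ^ n * Real.exp (-(b / 2 * h ^ 2))) := by ring

lemma tendsto_sq_exp {b : ℝ} (hb : 0 < b) :
    Tendsto (fun h : ℝ => Real.exp (-(b * h ^ 2))) atTop (nhds 0) := by
  have h1 : Tendsto (fun h : ℝ => b * h ^ 2) atTop atTop :=
    Tendsto.const_mul_atTop hb (tendsto_pow_atTop two_ne_zero)
  exact (Real.tendsto_exp_neg_atTop_nhds_zero.comp h1).congr fun x => rfl

lemma tendsto_lin_exp {b : ℝ} (hb : 0 < b) :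
    Tendsto (fun h : ℝ => h * Real.exp (-(b * h ^ 2))) atTop (nhds 0) := by
  have hlo := (rpow_mul_exp_neg_mul_sq_isLittleO_exp_neg hb 1).isBigO
  have h2 : Tendsto (fun x : ℝ => Real.exp (-(1/2) * x)) atTop (nhds 0) := by
    have h1 : Tendsto (fun h : ℝ => (1/2 : ℝ) * h) atTop atTop :=
      Tendsto.const_mul_atTop one_half_pos tendsto_id
    exact (Real.tendsto_exp_neg_atTop_nhds_zero.comp h1).congr fun x => by
      simp [Function.comp, neg_mul]
  have := hlo.trans_tendsto h2
  simpa [Real.rpow_one, neg_mul] using this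

/-- `∫_0^∞ 2 b h e^{-b h²} = 1`. -/
lemma J1 {b : ℝ} (hb : 0 < b) :
    ∫ h in Ioi (0:ℝ), 2 * b * h * Real.exp (-(b * h ^ 2)) = 1 := by
  have hF : ∀ x ∈ Ici (0:ℝ), HasDerivAt (fun h : ℝ => -Real.exp (-(b * h ^ 2)))
      (2 * b * x * Real.exp (-(b * x ^ 2))) x := by
    intro x _
    have h1 : HasDerivAt (fun h : ℝ => -(b * h ^ 2)) (-(b * (2 * x))) x := by
      simpa using ((hasDerivAt_pow 2 x).const_mul b).fun_neg
    have h2 := h1.exp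
    convert (show HasDerivAt (fun h : ℝ => -Real.exp (-(b * h ^ 2))) _ x from h2.fun_neg) using 1; ring
  have hint : IntegrableOn (fun x : ℝ => 2 * b * x * Real.exp (-(b * x ^ 2))) (Ioi 0) := by
    have := (intOn_pow hb 1).const_mul (2 * b)
    have heq : (fun x : ℝ => 2 * b * x * Real.exp (-(b * x ^ 2))) =
        fun h : ℝ => (2 * b) * (h ^ 1 * Real.exp (-(b * h ^ 2))) := by funext h; ring
    rw [heq]; exact this
  have htend : Tendsto (fun h : ℝ => -Real.exp (-(b * h ^ 2))) atTop (nhds 0) := by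
    simpa using (tendsto_sq_exp hb).neg
  have := integral_Ioi_of_hasDerivAt_of_tendsto' hF hint htend
  simpa using this

/-- `∫_0^∞ 2 b h² e^{-b h²} = ∫_0^∞ e^{-b h²}`. -/
lemma J2 {b : ℝ} (hb : 0 < b) :
    ∫ h in Ioi (0:ℝ), 2 * b * h ^ 2 * Real.exp (-(b * h ^ 2)) =
      ∫ h in Ioi (0:ℝ), Real.exp (-(b * h ^ 2)) := by
  have hF : ∀ x ∈ Ici (0:ℝ), HasDerivAt (fun h : ℝ => -(h * Real.exp (-(b * h ^ 2))))
      (2 * b * x ^ 2 * Real.exp (-(b * x ^ 2)) - Real.exp (-(b * x ^ 2))) x := by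
    intro x _
    have h1 : HasDerivAt (fun h : ℝ => -(b * h ^ 2)) (-(b * (2 * x))) x := by
      simpa using ((hasDerivAt_pow 2 x).const_mul b).fun_neg
    have h2 := h1.exp
    have h3 := (hasDerivAt_id x).mul h2
    convert (show HasDerivAt (fun h : ℝ => -(h * Real.exp (-(b * h ^ 2)))) _ x from h3.fun_neg) using 1; simp only [id_eq]; ring
  have hi2 : IntegrableOn (fun x : ℝ => 2 * b * x ^ 2 * Real.exp (-(b * x ^ 2))) (Ioi 0) := by
    have := (intOn_pow hb 2).const_mul (2 * b)
    have heq : (fun x : ℝ => 2 * b * x ^ 2 * Real.exp (-(b * x ^ 2))) =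
        fun h : ℝ => (2 * b) * (h ^ 2 * Real.exp (-(b * h ^ 2))) := by funext h; ring
    rw [heq]; exact this
  have hi0 : IntegrableOn (fun x : ℝ => Real.exp (-(b * x ^ 2))) (Ioi 0) := by
    have := intOn_pow hb 0
    simpa using this
  have hint : IntegrableOn
      (fun x : ℝ => 2 * b * x ^ 2 * Real.exp (-(b * x ^ 2)) - Real.exp (-(b * x ^ 2)))
      (Ioi 0) := hi2.sub hi0
  have htend : Tendsto (fun h : ℝ => -(h * Real.exp (-(b * h ^ 2)))) atTop (nhds 0) := by
    simpa using (tendsto_lin_exp hb).neg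
  have heval := integral_Ioi_of_hasDerivAt_of_tendsto' hF hint htend
  rw [integral_sub hi2 hi0] at heval
  simp only [ne_eq, OfNat.ofNat_ne_zero, not_false_eq_true, zero_pow, mul_zero, neg_zero,
    Real.exp_zero, mul_one, zero_mul, sub_zero] at heval
  linarith

/-- Moment-generating-function order `H_V ≥_{mgf} R ≥_{mgf} H_S`: for all `λ > 0` and
`γ ≥ 0`, `∫₀^∞ e^{γh} 4πλ^{3/2}h²e^{−λπh²} dh ≥ ∫₀^∞ e^{γh} 2λπh e^{−λπh²} dh ≥
∫₀^∞ e^{γh} 2λ^{1/2} e^{−λπh²} dh`, all three integrals being finite. -/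
theorem stmt_14 (lam γ : ℝ) (hlam : 0 < lam) (hγ : 0 ≤ γ) :
    IntegrableOn (fun h : ℝ => Real.exp (γ * h) *
      (4 * Real.pi * lam ^ ((3:ℝ)/2) * h ^ 2 * Real.exp (-(lam * Real.pi * h ^ 2)))) (Ioi 0) ∧
    IntegrableOn (fun h : ℝ => Real.exp (γ * h) *
      (2 * lam * Real.pi * h * Real.exp (-(lam * Real.pi * h ^ 2)))) (Ioi 0) ∧
    IntegrableOn (fun h : ℝ => Real.exp (γ * h) *
      (2 * lam ^ ((1:ℝ)/2) * Real.exp (-(lam * Real.pi * h ^ 2)))) (Ioi 0) ∧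
    (∫ h in Ioi (0:ℝ), Real.exp (γ * h) *
        (4 * Real.pi * lam ^ ((3:ℝ)/2) * h ^ 2 * Real.exp (-(lam * Real.pi * h ^ 2)))) ≥
      (∫ h in Ioi (0:ℝ), Real.exp (γ * h) *
        (2 * lam * Real.pi * h * Real.exp (-(lam * Real.pi * h ^ 2)))) ∧
    (∫ h in Ioi (0:ℝ), Real.exp (γ * h) *
        (2 * lam * Real.pi * h * Real.exp (-(lam * Real.pi * h ^ 2)))) ≥
      ∫ h in Ioi (0:ℝ), Real.exp (γ * h) *
        (2 * lam ^ ((1:ℝ)/2) * Real.exp (-(lam * Real.pi * h ^ 2))) := by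
  have hb : 0 < lam * Real.pi := mul_pos hlam Real.pi_pos
  have hs : 0 < lam ^ ((1:ℝ)/2) := Real.rpow_pos_of_pos hlam _
  have h32 : lam ^ ((3:ℝ)/2) = lam ^ ((1:ℝ)/2) * lam := by
    have h : lam ^ ((1:ℝ)/2 + 1) = lam ^ ((1:ℝ)/2) * lam ^ (1:ℝ) := Real.rpow_add hlam _ _
    rw [Real.rpow_one] at h
    rw [show (3:ℝ)/2 = (1:ℝ)/2 + 1 by norm_num, h]
  have hsqrt : lam ^ ((1:ℝ)/2) = Real.sqrt lam := (Real.sqrt_eq_rpow lam).symm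
  set s : ℝ := lam ^ ((1:ℝ)/2) with hs_def
  have hkey : 2 * s * ((∫ h in Ioi (0:ℝ), Real.exp (-(lam * Real.pi * h ^ 2)))) = 1 := by
    have hg : (∫ h in Ioi (0:ℝ), Real.exp (-(lam * Real.pi * h ^ 2))) =
        Real.sqrt (Real.pi / (lam * Real.pi)) / 2 := by
      simpa [neg_mul] using integral_gaussian_Ioi (lam * Real.pi)
    rw [hg]
    have h1 : Real.pi / (lam * Real.pi) = lam⁻¹ := by
      field_simp
    rw [h1, Real.sqrt_inv, hsqrt]
    have h2 : Real.sqrt lam ≠ 0 := ne_of_gt (Real.sqrt_pos.mpr hlam)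
    field_simp
  -- integrability of the three integrands
  have i1 : IntegrableOn (fun h : ℝ => Real.exp (γ * h) *
      (4 * Real.pi * lam ^ ((3:ℝ)/2) * h ^ 2 * Real.exp (-(lam * Real.pi * h ^ 2)))) (Ioi 0) := by
    have := (aux_integrable hb hγ 2).const_mul (4 * Real.pi * lam ^ ((3:ℝ)/2))
    have heq : (fun h : ℝ => Real.exp (γ * h) *
        (4 * Real.pi * lam ^ ((3:ℝ)/2) * h ^ 2 * Real.exp (-(lam * Real.pi * h ^ 2)))) =
        fun h : ℝ => (4 * Real.pi * lam ^ ((3:ℝ)/2)) *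
          (Real.exp (γ * h) * (h ^ 2 * Real.exp (-(lam * Real.pi * h ^ 2)))) := by
      funext h; ring
    rw [heq]; exact this
  have i2 : IntegrableOn (fun h : ℝ => Real.exp (γ * h) *
      (2 * lam * Real.pi * h * Real.exp (-(lam * Real.pi * h ^ 2)))) (Ioi 0) := by
    have := (aux_integrable hb hγ 1).const_mul (2 * lam * Real.pi)
    have heq : (fun h : ℝ => Real.exp (γ * h) *
        (2 * lam * Real.pi * h * Real.exp (-(lam * Real.pi * h ^ 2)))) =
        fun h : ℝ => (2 * lam * Real.pi) *
          (Real.exp (γ * h) * (h ^ 1 * Real.exp (-(lam * Real.pi * h ^ 2)))) := by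
      funext h; ring
    rw [heq]; exact this
  have i3 : IntegrableOn (fun h : ℝ => Real.exp (γ * h) *
      (2 * s * Real.exp (-(lam * Real.pi * h ^ 2)))) (Ioi 0) := by
    have := (aux_integrable hb hγ 0).const_mul (2 * s)
    have heq : (fun h : ℝ => Real.exp (γ * h) *
        (2 * s * Real.exp (-(lam * Real.pi * h ^ 2)))) =
        fun h : ℝ => (2 * s) *
          (Real.exp (γ * h) * (h ^ 0 * Real.exp (-(lam * Real.pi * h ^ 2)))) := by
      funext h; ring
    rw [heq]; exact this
  -- integrability of the three densities
  have d1 : IntegrableOn (fun h : ℝ =>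
      4 * Real.pi * lam ^ ((3:ℝ)/2) * h ^ 2 * Real.exp (-(lam * Real.pi * h ^ 2))) (Ioi 0) := by
    have := (intOn_pow hb 2).const_mul (4 * Real.pi * lam ^ ((3:ℝ)/2))
    have heq : (fun h : ℝ =>
        4 * Real.pi * lam ^ ((3:ℝ)/2) * h ^ 2 * Real.exp (-(lam * Real.pi * h ^ 2))) =
        fun h : ℝ => (4 * Real.pi * lam ^ ((3:ℝ)/2)) *
          (h ^ 2 * Real.exp (-(lam * Real.pi * h ^ 2))) := by funext h; ring
    rw [heq]; exact this
  have d2 : IntegrableOn (fun h : ℝ =>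
      2 * lam * Real.pi * h * Real.exp (-(lam * Real.pi * h ^ 2))) (Ioi 0) := by
    have := (intOn_pow hb 1).const_mul (2 * lam * Real.pi)
    have heq : (fun h : ℝ =>
        2 * lam * Real.pi * h * Real.exp (-(lam * Real.pi * h ^ 2))) =
        fun h : ℝ => (2 * lam * Real.pi) *
          (h ^ 1 * Real.exp (-(lam * Real.pi * h ^ 2))) := by funext h; ring
    rw [heq]; exact this
  have d3 : IntegrableOn (fun h : ℝ =>
      2 * s * Real.exp (-(lam * Real.pi * h ^ 2))) (Ioi 0) := by
    have := (intOn_pow hb 0).const_mul (2 * s)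
    have heq : (fun h : ℝ =>
        2 * s * Real.exp (-(lam * Real.pi * h ^ 2))) =
        fun h : ℝ => (2 * s) *
          (h ^ 0 * Real.exp (-(lam * Real.pi * h ^ 2))) := by funext h; ring
    rw [heq]; exact this
  -- the three density integrals equal 1
  have IR : (∫ h in Ioi (0:ℝ),
      2 * lam * Real.pi * h * Real.exp (-(lam * Real.pi * h ^ 2))) = 1 := by
    have := J1 hb
    have heq : (∫ h in Ioi (0:ℝ),
        2 * lam * Real.pi * h * Real.exp (-(lam * Real.pi * h ^ 2))) =
        ∫ h in Ioi (0:ℝ), 2 * (lam * Real.pi) * h * Real.exp (-(lam * Real.pi * h ^ 2)) := by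
      congr 1; funext h; ring
    rw [heq]; exact this
  have IV : (∫ h in Ioi (0:ℝ),
      4 * Real.pi * lam ^ ((3:ℝ)/2) * h ^ 2 * Real.exp (-(lam * Real.pi * h ^ 2))) = 1 := by
    have heq : (∫ h in Ioi (0:ℝ),
        4 * Real.pi * lam ^ ((3:ℝ)/2) * h ^ 2 * Real.exp (-(lam * Real.pi * h ^ 2))) =
        ∫ h in Ioi (0:ℝ), (2 * s) *
          (2 * (lam * Real.pi) * h ^ 2 * Real.exp (-(lam * Real.pi * h ^ 2))) := by
      congr 1; funext h; rw [h32]; ring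
    rw [heq, integral_const_mul, J2 hb, hkey]
  have IS : (∫ h in Ioi (0:ℝ),
      2 * s * Real.exp (-(lam * Real.pi * h ^ 2))) = 1 := by
    rw [integral_const_mul]
    exact hkey
  refine ⟨i1, i2, i3, ?_, ?_⟩
  · -- H_V ≥ R
    set c : ℝ := 1 / (2 * s) with hc_def
    rw [ge_iff_le, ← sub_nonneg, ← integral_sub i1 i2]
    have hlow : (∫ h in Ioi (0:ℝ), Real.exp (γ * c) *
        (4 * Real.pi * lam ^ ((3:ℝ)/2) * h ^ 2 * Real.exp (-(lam * Real.pi * h ^ 2)) -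
          2 * lam * Real.pi * h * Real.exp (-(lam * Real.pi * h ^ 2)))) = 0 := by
      rw [integral_const_mul, integral_sub d1 d2, IV, IR]
      simp
    have hmono : (∫ h in Ioi (0:ℝ), Real.exp (γ * c) *
        (4 * Real.pi * lam ^ ((3:ℝ)/2) * h ^ 2 * Real.exp (-(lam * Real.pi * h ^ 2)) -
          2 * lam * Real.pi * h * Real.exp (-(lam * Real.pi * h ^ 2)))) ≤
        ∫ h in Ioi (0:ℝ), (Real.exp (γ * h) *
          (4 * Real.pi * lam ^ ((3:ℝ)/2) * h ^ 2 * Real.exp (-(lam * Real.pi * h ^ 2))) -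
          Real.exp (γ * h) *
          (2 * lam * Real.pi * h * Real.exp (-(lam * Real.pi * h ^ 2)))) := by
      refine setIntegral_mono_on ((d1.sub d2).const_mul _) (i1.sub i2) measurableSet_Ioi ?_
      intro h hh
      rw [mem_Ioi] at hh
      have hrw : Real.exp (γ * h) *
          (4 * Real.pi * lam ^ ((3:ℝ)/2) * h ^ 2 * Real.exp (-(lam * Real.pi * h ^ 2))) -
          Real.exp (γ * h) *
          (2 * lam * Real.pi * h * Real.exp (-(lam * Real.pi * h ^ 2))) =
          Real.exp (γ * h) *
          (4 * Real.pi * lam ^ ((3:ℝ)/2) * h ^ 2 * Real.exp (-(lam * Real.pi * h ^ 2)) -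
            2 * lam * Real.pi * h * Real.exp (-(lam * Real.pi * h ^ 2))) := by ring
      rw [hrw]
      set D : ℝ := 4 * Real.pi * lam ^ ((3:ℝ)/2) * h ^ 2 * Real.exp (-(lam * Real.pi * h ^ 2)) -
          2 * lam * Real.pi * h * Real.exp (-(lam * Real.pi * h ^ 2)) with hD_def
      have hDfact : D = (2 * lam * Real.pi * h * Real.exp (-(lam * Real.pi * h ^ 2))) *
          (2 * s * h - 1) := by rw [hD_def, h32]; ring
      have hpos : 0 < 2 * lam * Real.pi * h * Real.exp (-(lam * Real.pi * h ^ 2)) := by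
        have := Real.exp_pos (-(lam * Real.pi * h ^ 2))
        positivity
      rcases le_total h c with hhc | hhc
      · have hsh : 2 * s * h - 1 ≤ 0 := by
          have : 2 * s * h ≤ 2 * s * c := by nlinarith
          have hcval : 2 * s * c = 1 := by rw [hc_def]; field_simp
          linarith
        have hDle : D ≤ 0 := by
          rw [hDfact]; exact mul_nonpos_of_nonneg_of_nonpos hpos.le hsh
        have hexp : Real.exp (γ * h) ≤ Real.exp (γ * c) :=
          Real.exp_le_exp.mpr (mul_le_mul_of_nonneg_left hhc hγ)
        exact mul_le_mul_of_nonpos_right hexp hDle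
      · have hsh : 0 ≤ 2 * s * h - 1 := by
          have : 2 * s * c ≤ 2 * s * h := by nlinarith
          have hcval : 2 * s * c = 1 := by rw [hc_def]; field_simp
          linarith
        have hDge : 0 ≤ D := by
          rw [hDfact]; exact mul_nonneg hpos.le hsh
        have hexp : Real.exp (γ * c) ≤ Real.exp (γ * h) :=
          Real.exp_le_exp.mpr (mul_le_mul_of_nonneg_left hhc hγ)
        exact mul_le_mul_of_nonneg_right hexp hDge
    calc (0:ℝ) = ∫ h in Ioi (0:ℝ), Real.exp (γ * c) *
        (4 * Real.pi * lam ^ ((3:ℝ)/2) * h ^ 2 * Real.exp (-(lam * Real.pi * h ^ 2)) -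
          2 * lam * Real.pi * h * Real.exp (-(lam * Real.pi * h ^ 2))) := hlow.symm
      _ ≤ _ := hmono
  · -- R ≥ H_S
    set c : ℝ := s / (lam * Real.pi) with hc_def
    rw [ge_iff_le, ← sub_nonneg, ← integral_sub i2 i3]
    have hlow : (∫ h in Ioi (0:ℝ), Real.exp (γ * c) *
        (2 * lam * Real.pi * h * Real.exp (-(lam * Real.pi * h ^ 2)) -
          2 * s * Real.exp (-(lam * Real.pi * h ^ 2)))) = 0 := by
      rw [integral_const_mul, integral_sub d2 d3, IR, IS]
      simp
    have hmono : (∫ h in Ioi (0:ℝ), Real.exp (γ * c) *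
        (2 * lam * Real.pi * h * Real.exp (-(lam * Real.pi * h ^ 2)) -
          2 * s * Real.exp (-(lam * Real.pi * h ^ 2)))) ≤
        ∫ h in Ioi (0:ℝ), (Real.exp (γ * h) *
          (2 * lam * Real.pi * h * Real.exp (-(lam * Real.pi * h ^ 2))) -
          Real.exp (γ * h) *
          (2 * s * Real.exp (-(lam * Real.pi * h ^ 2)))) := by
      refine setIntegral_mono_on ((d2.sub d3).const_mul _) (i2.sub i3) measurableSet_Ioi ?_
      intro h hh
      rw [mem_Ioi] at hh
      have hrw : Real.exp (γ * h) *
          (2 * lam * Real.pi * h * Real.exp (-(lam * Real.pi * h ^ 2))) -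
          Real.exp (γ * h) *
          (2 * s * Real.exp (-(lam * Real.pi * h ^ 2))) =
          Real.exp (γ * h) *
          (2 * lam * Real.pi * h * Real.exp (-(lam * Real.pi * h ^ 2)) -
            2 * s * Real.exp (-(lam * Real.pi * h ^ 2))) := by ring
      rw [hrw]
      set D : ℝ := 2 * lam * Real.pi * h * Real.exp (-(lam * Real.pi * h ^ 2)) -
          2 * s * Real.exp (-(lam * Real.pi * h ^ 2)) with hD_def
      have hDfact : D = Real.exp (-(lam * Real.pi * h ^ 2)) * (2 * lam * Real.pi * h - 2 * s) := by
        rw [hD_def]; ring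
      have hE : 0 < Real.exp (-(lam * Real.pi * h ^ 2)) := Real.exp_pos _
      have hcval : 2 * lam * Real.pi * c = 2 * s := by
        rw [hc_def]; field_simp
      rcases le_total h c with hhc | hhc
      · have hsh : 2 * lam * Real.pi * h - 2 * s ≤ 0 := by nlinarith
        have hDle : D ≤ 0 := by
          rw [hDfact]; exact mul_nonpos_of_nonneg_of_nonpos hE.le hsh
        have hexp : Real.exp (γ * h) ≤ Real.exp (γ * c) :=
          Real.exp_le_exp.mpr (mul_le_mul_of_nonneg_left hhc hγ)
        exact mul_le_mul_of_nonpos_right hexp hDle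
      · have hsh : 0 ≤ 2 * lam * Real.pi * h - 2 * s := by nlinarith
        have hDge : 0 ≤ D := by
          rw [hDfact]; exact mul_nonneg hE.le hsh
        have hexp : Real.exp (γ * c) ≤ Real.exp (γ * h) :=
          Real.exp_le_exp.mpr (mul_le_mul_of_nonneg_left hhc hγ)
        exact mul_le_mul_of_nonneg_right hexp hDge
    calc (0:ℝ) = ∫ h in Ioi (0:ℝ), Real.exp (γ * c) *
        (2 * lam * Real.pi * h * Real.exp (-(lam * Real.pi * h ^ 2)) -
          2 * s * Real.exp (-(lam * Real.pi * h ^ 2))) := hlow.symm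
      _ ≤ _ := hmono
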